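/- For every N ∈ ℕ, the following identity holds in A_L: (a · xᴺ · e · x⁻ᴺ)ᴺ = ū₂⁻ᴺ · (ū₂⁻¹ū₁ · ū₃⁻¹ū₄)ᴺ · ū₂ᴺ. -/

import Mathlib

/-- The relator set of the right-angled Artin group of a simple graph `G`:
commutators of pairs of adjacent vertices. -/
def raagRels {V : Type*} (G : SimpleGraph V) : Set (FreeGroup V) :=
  {r | ∃ u v : V, G.Adj u v ∧
    r = FreeGroup.of u * FreeGroup.of v * (FreeGroup.of u)⁻¹ * (FreeGroup.of v)⁻¹}

/-- The right-angled Artin group of a simple graph `G`. -/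
abbrev RAAG {V : Type*} (G : SimpleGraph V) : Type _ :=
  PresentedGroup (raagRels G)

/-- The image `v̄` of a vertex (generator) `v` in the right-angled Artin group. -/
def RAAG.gen {V : Type*} (G : SimpleGraph V) (v : V) : RAAG G :=
  PresentedGroup.of (rels := raagRels G) v

/-- The path graph `L` on the four vertices `u₁ = 0, u₂ = 1, u₃ = 2, u₄ = 3`,
with edges `{u₁,u₂}, {u₂,u₃}, {u₃,u₄}`. -/
abbrev L : SimpleGraph (Fin 4) := SimpleGraph.pathGraph 4

/-- The right-angled Artin group
`A_L = ⟨u₁,u₂,u₃,u₄ ∣ [u₁,u₂] = [u₂,u₃] = [u₃,u₄] = 1⟩`. -/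
abbrev A_L : Type _ := RAAG L

/-- `a = ū₂⁻¹ū₁`. -/
def elt_a : A_L := (RAAG.gen L 1)⁻¹ * RAAG.gen L 0

/-- `x = ū₂⁻¹ū₃`. -/
def elt_x : A_L := (RAAG.gen L 1)⁻¹ * RAAG.gen L 2

/-- `e = ū₃⁻¹ū₄`. -/
def elt_e : A_L := (RAAG.gen L 2)⁻¹ * RAAG.gen L 3

/-- The homomorphism `φ : FreeGroup (Fin 3) →* A_L` with `φ g₀ = a`, `φ g₁ = x`,
`φ g₂ = e`. -/
def phi : FreeGroup (Fin 3) →* A_L := FreeGroup.lift ![elt_a, elt_x, elt_e]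

lemma raag_comm {V : Type*} {G : SimpleGraph V} {u v : V} (h : G.Adj u v) :
    Commute (RAAG.gen G u) (RAAG.gen G v) := by
  rw [← commutatorElement_eq_one_iff_commute]
  have : ((QuotientGroup.mk (FreeGroup.of u * FreeGroup.of v * (FreeGroup.of u)⁻¹ *
      (FreeGroup.of v)⁻¹) : PresentedGroup (raagRels G))) = 1 := by
    rw [QuotientGroup.eq_one_iff]
    exact Subgroup.subset_normalClosure ⟨u, v, h, rfl⟩
  have h2 : PresentedGroup.mk (raagRels G) (FreeGroup.of u * FreeGroup.of v * (FreeGroup.of u)⁻¹ *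
      (FreeGroup.of v)⁻¹) = 1 := this
  rw [commutatorElement_def]
  simpa [RAAG.gen, PresentedGroup.of, commutatorElement, map_mul, map_inv] using h2

theorem stmt_6 (N : ℕ) :
    (elt_a * elt_x ^ N * elt_e * (elt_x ^ N)⁻¹) ^ N
      = (RAAG.gen L 1 ^ N)⁻¹
          * (((RAAG.gen L 1)⁻¹ * RAAG.gen L 0 * ((RAAG.gen L 2)⁻¹ * RAAG.gen L 3)) ^ N)
          * RAAG.gen L 1 ^ N := by
  have h12 : Commute (RAAG.gen L 0) (RAAG.gen L 1) :=
    raag_comm ((SimpleGraph.pathGraph_adj).2 (Or.inl rfl))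
  have h23 : Commute (RAAG.gen L 1) (RAAG.gen L 2) :=
    raag_comm ((SimpleGraph.pathGraph_adj).2 (Or.inl rfl))
  have h34 : Commute (RAAG.gen L 2) (RAAG.gen L 3) :=
    raag_comm ((SimpleGraph.pathGraph_adj).2 (Or.inl rfl))
  set g1 := RAAG.gen L 0
  set g2 := RAAG.gen L 1
  set g3 := RAAG.gen L 2
  set g4 := RAAG.gen L 3
  have hx : elt_x ^ N = (g2 ^ N)⁻¹ * g3 ^ N := by
    rw [elt_x, (h23.inv_left).mul_pow, inv_pow]
  have c1 : Commute g1 (g2 ^ N)⁻¹ := (h12.pow_right N).inv_right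
  have c2 : Commute g4 (g3 ^ N)⁻¹ := ((h34.symm).pow_right N).inv_right
  have key : elt_a * elt_x ^ N * elt_e * (elt_x ^ N)⁻¹
      = (g2 ^ N)⁻¹ * (elt_a * elt_e) * g2 ^ N := by
    rw [hx, elt_a, elt_e]
    calc g2⁻¹ * g1 * ((g2 ^ N)⁻¹ * g3 ^ N) * (g3⁻¹ * g4) * ((g2 ^ N)⁻¹ * g3 ^ N)⁻¹
        = g2⁻¹ * (g1 * (g2 ^ N)⁻¹) * g3 ^ N * g3⁻¹ * (g4 * (g3 ^ N)⁻¹) * g2 ^ N := by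
          group
      _ = g2⁻¹ * ((g2 ^ N)⁻¹ * g1) * g3 ^ N * g3⁻¹ * ((g3 ^ N)⁻¹ * g4) * g2 ^ N := by
          rw [c1.eq, c2.eq]
      _ = (g2 ^ N)⁻¹ * (g2⁻¹ * g1) * (g3⁻¹ * g4) * g2 ^ N := by
          rw [← mul_assoc g2⁻¹ (g2 ^ N)⁻¹ g1,
            (((Commute.refl g2).pow_right N).inv_right.inv_left).eq]
          group
      _ = (g2 ^ N)⁻¹ * (g2⁻¹ * g1 * (g3⁻¹ * g4)) * g2 ^ N := by group
  have hc : ((g2 ^ N)⁻¹ * (elt_a * elt_e) * g2 ^ N) ^ N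
      = (g2 ^ N)⁻¹ * (elt_a * elt_e) ^ N * g2 ^ N := by
    nth_rewrite 2 [← inv_inv (g2 ^ N)]
    rw [conj_pow, inv_inv]
  rw [key, hc, elt_a, elt_e]
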